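/- Let P be the uniform distribution on [0,1] and for n ≥ 1 define g(d) = d^3/3 + d/10000 + (1-d)^3/(12 n^2) for d ∈ [0,1]. Then g attains its minimum on [0, 1] at d = (50 - n√(10001 - 4n^2))/(50 - 200 n^2) when 1 ≤ n ≤ 50; this critical value satisfies d > 0 for 1 ≤ n ≤ 49 and d = 0 for n = 50. -/

import Mathlib

set_option maxHeartbeats 1600000 in
lemma stmt17_aux (N : ℝ) (hN1 : 1 ≤ N) (hN50 : N ≤ 50)
    (g : ℝ → ℝ)
    (hg : ∀ d, g d = d^3 / 3 + d / 10000 + (1 - d)^3 / (12 * N^2)) :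
    IsMinOn g (Set.Icc 0 1)
      ((50 - N * Real.sqrt (10001 - 4 * N^2)) / (50 - 200 * N^2)) ∧
    (N ≤ 49 →
      0 < (50 - N * Real.sqrt (10001 - 4 * N^2)) / (50 - 200 * N^2)) ∧
    (N = 50 →
      (50 - N * Real.sqrt (10001 - 4 * N^2)) / (50 - 200 * N^2) = 0) := by
  have hNpos : (0:ℝ) < N := lt_of_lt_of_le one_pos hN1
  have hDnn : (0:ℝ) ≤ 10001 - 4 * N^2 := by nlinarith
  obtain ⟨s, hs⟩ : ∃ s : ℝ, s = Real.sqrt (10001 - 4 * N^2) := ⟨_, rfl⟩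
  rw [← hs]
  have hs0 : 0 ≤ s := hs ▸ Real.sqrt_nonneg _
  have hs2 : s^2 = 10001 - 4 * N^2 := hs ▸ Real.sq_sqrt hDnn
  obtain ⟨d, hd⟩ : ∃ d : ℝ, d = (50 - N * s) / (50 - 200 * N^2) := ⟨_, rfl⟩
  rw [← hd]
  have hden : 50 - 200 * N^2 < 0 := by nlinarith
  have hNs2 : (N * s)^2 = N^2 * (10001 - 4 * N^2) := by rw [mul_pow, hs2]
  have hNs50 : 50 ≤ N * s := by
    have hp : (0:ℝ) ≤ (2500 - N^2) * (4 * N^2 - 1) :=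
      mul_nonneg (by nlinarith) (by nlinarith)
    have h1 : 2500 ≤ (N * s)^2 := by nlinarith [hNs2]
    nlinarith [mul_nonneg hNpos.le hs0]
  have hd0 : 0 ≤ d := by
    rw [hd]
    exact div_nonneg_iff.mpr (Or.inr ⟨by linarith, hden.le⟩)
  have hs101 : s ≤ 101 := by nlinarith
  have hd1 : d ≤ 1 := by
    rw [hd, div_le_one_of_neg hden]
    nlinarith
  -- the critical equation
  have hcrit : (4 * N^2 - 1) * d^2 + 2 * d + N^2 / 2500 - 1 = 0 := by
    rw [hd]
    have hne : (50 - 200 * N^2) ≠ 0 := ne_of_lt hden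
    have hne' : 50 - N^2*200 ≠ 0 := by intro h; apply hne; linarith
    field_simp
    nlinarith [hs2, sq_nonneg s]
  -- derivative of g
  have hderiv : ∀ x : ℝ, HasDerivAt g (x^2 + 1/10000 - (1-x)^2 / (4 * N^2)) x := by
    intro x
    have hgf : g = fun t => t^3 / 3 + t / 10000 + (1 - t)^3 / (12 * N^2) := funext hg
    rw [hgf]
    have hA : HasDerivAt (fun t : ℝ => t^3) (3 * x^2) x := by
      simpa using hasDerivAt_pow 3 x
    have hB : HasDerivAt (fun t : ℝ => (1 - t)) (-1) x := by
      simpa using (hasDerivAt_id x).const_sub (1:ℝ)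
    have hB3 : HasDerivAt (fun t : ℝ => (1 - t)^3) (3 * (1-x)^2 * (-1)) x := by
      simpa using hB.fun_pow 3
    have h := ((hA.div_const 3).fun_add ((hasDerivAt_id x).div_const 10000)).fun_add
      (hB3.div_const (12 * N^2))
    refine h.congr_deriv ?_
    have hne : (N:ℝ)^2 ≠ 0 := by positivity
    field_simp
    ring
  have hcont : Continuous g :=
    continuous_iff_continuousAt.mpr fun x => (hderiv x).differentiableAt.continuousAt
  have h4 : (0:ℝ) < 4 * N^2 := by positivity
  have hq : ∀ x : ℝ, x^2 + 1/10000 - (1-x)^2 / (4 * N^2)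
      = ((4 * N^2 - 1) * x^2 + 2 * x + N^2 / 2500 - 1) / (4 * N^2) := by
    intro x
    field_simp
    ring
  have hfac : ∀ x : ℝ, (4 * N^2 - 1) * x^2 + 2 * x + N^2 / 2500 - 1
      = (x - d) * ((4 * N^2 - 1) * (x + d) + 2) := by
    intro x
    linear_combination hcrit
  have hsign_le : ∀ x ∈ Set.Icc (0:ℝ) d, x^2 + 1/10000 - (1-x)^2 / (4 * N^2) ≤ 0 := by
    intro x hx
    rw [hq x]
    apply div_nonpos_of_nonpos_of_nonneg _ h4.le
    rw [hfac x]
    exact mul_nonpos_iff.mpr (Or.inr ⟨sub_nonpos.mpr hx.2,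
      by nlinarith [hx.1, hd0]⟩)
  have hsign_ge : ∀ x ∈ Set.Icc d (1:ℝ), 0 ≤ x^2 + 1/10000 - (1-x)^2 / (4 * N^2) := by
    intro x hx
    rw [hq x]
    apply div_nonneg _ h4.le
    rw [hfac x]
    exact mul_nonneg (sub_nonneg.mpr hx.1) (by nlinarith [hx.1, hd0])
  have hanti : AntitoneOn g (Set.Icc 0 d) := by
    apply antitoneOn_of_deriv_nonpos (convex_Icc _ _) hcont.continuousOn
      (fun x _ => (hderiv x).differentiableAt.differentiableWithinAt)
    intro x hx
    rw [interior_Icc] at hx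
    rw [(hderiv x).deriv]
    exact hsign_le x ⟨hx.1.le, hx.2.le⟩
  have hmono : MonotoneOn g (Set.Icc d 1) := by
    apply monotoneOn_of_deriv_nonneg (convex_Icc _ _) hcont.continuousOn
      (fun x _ => (hderiv x).differentiableAt.differentiableWithinAt)
    intro x hx
    rw [interior_Icc] at hx
    rw [(hderiv x).deriv]
    exact hsign_ge x ⟨hx.1.le, hx.2.le⟩
  refine ⟨?_, ?_, ?_⟩
  · intro x hx
    simp only [Set.mem_Icc] at hx
    simp only [Set.mem_setOf_eq]
    rcases le_total x d with h | h
    · exact hanti ⟨hx.1, h⟩ ⟨hd0, le_refl d⟩ h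
    · exact hmono ⟨le_refl d, hd1⟩ ⟨h, hx.2⟩ h
  · intro hN49
    have hNsgt : 50 < N * s := by
      have hp : (0:ℝ) < (2500 - N^2) * (4 * N^2 - 1) :=
        mul_pos (by nlinarith) (by nlinarith)
      have h1 : 2500 < (N * s)^2 := by nlinarith [hNs2]
      nlinarith [mul_nonneg hNpos.le hs0]
    rw [hd]
    exact div_pos_of_neg_of_neg (by linarith) hden
  · intro hNeq
    have hseq : s = 1 := by
      rw [hs, hNeq, show (10001 - 4 * (50:ℝ)^2) = 1 by norm_num, Real.sqrt_one]
    rw [hd, hseq, hNeq]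
    norm_num

/-- For the conditional unconstrained quantization of the uniform distribution on `[0,1]`
with conditional set `{(0, 1/100)}`: the distortion function
`g(d) = d³/3 + d/10000 + (1-d)³/(12n²)` attains its minimum on `[0,1]` at
`d = (50 - n√(10001 - 4n²))/(50 - 200n²)` for `1 ≤ n ≤ 50`; this critical value is
positive for `1 ≤ n ≤ 49` and zero for `n = 50`. -/
theorem stmt17 (n : ℕ) (hn : 1 ≤ n) (hn' : n ≤ 50)
    (g : ℝ → ℝ)
    (hg : ∀ d, g d = d^3 / 3 + d / 10000 + (1 - d)^3 / (12 * (n : ℝ)^2)) :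
    IsMinOn g (Set.Icc 0 1)
      ((50 - (n : ℝ) * Real.sqrt (10001 - 4 * (n : ℝ)^2)) / (50 - 200 * (n : ℝ)^2)) ∧
    (n ≤ 49 →
      0 < (50 - (n : ℝ) * Real.sqrt (10001 - 4 * (n : ℝ)^2)) / (50 - 200 * (n : ℝ)^2)) ∧
    (n = 50 →
      (50 - (n : ℝ) * Real.sqrt (10001 - 4 * (n : ℝ)^2)) / (50 - 200 * (n : ℝ)^2) = 0) := by
  obtain ⟨h1, h2, h3⟩ := stmt17_aux (n : ℝ) (by exact_mod_cast hn) (by exact_mod_cast hn') g hg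
  exact ⟨h1, fun h => h2 (by exact_mod_cast h), fun h => h3 (by exact_mod_cast h)⟩
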